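/- arXiv:1510.06278 — 4 statements merged into one kernel-verified Lean document; each statement's English description precedes it below -/
import Mathlib

section
/- Suppose σ < κ ≤ μ < λ are infinite cardinals with κ and λ regular, |α|^{<κ} < λ for every α < λ, and for every function τ : λ × λ → σ there exist a stationary set U ⊆ {α < λ : cf(α) ≥ κ}, a function τ₁ : U → σ, and a family ⟨β_{v,ξ} : v ∈ [U]^{<κ}, ξ < μ⟩ of ordinals less than λ such that sup(v) < β_{v,ξ} for all v, ξ, and for every v ∈ [U]^{<κ} there is ξ < μ with τ(α, β_{v,ξ}) = τ₁(α) for every α ∈ v. Then the principle (*)^{2,2}_{λ,σ} holds: for every function c from the 2-element subsets of λ into σ, there are a set u ⊆ σ with |u| ≤ 2 and a set S ⊆ λ of cardinality λ such that whenever α < β are both in S, there are n ≤ 2 and ordinals α = γ₀ < ⋯ < γ_n = β with c{γ_l, γ_{l+1}} ∈ u for all l < n. -/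
open Cardinal Set

/-- `f <_D g` : the set of coordinates where `f i < g i` belongs to the ultrafilter `D`. -/
def ltD {ι J : Type} [LinearOrder J] (D : Ultrafilter ι) (f g : ι → J) : Prop :=
  {i | f i < g i} ∈ D

/-- An ultrafilter is nonprincipal iff it contains the complement of every singleton. -/
def Nonprincipal {ι : Type} (D : Ultrafilter ι) : Prop :=
  ∀ i : ι, ({i}ᶜ : Set ι) ∈ D

/-- `μ`-completeness: any intersection of fewer than `μ` members of `D` belongs to `D`. -/
def IsCompleteUF (μ : Cardinal) {ι : Type} (D : Ultrafilter ι) : Prop :=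
  ∀ s : Set (Set ι), #s < μ → (∀ A ∈ s, A ∈ D) → ⋂₀ s ∈ D

/-- A uniform ultrafilter: every member has full cardinality. -/
def IsUniformUF {ι : Type} (D : Ultrafilter ι) : Prop :=
  ∀ A ∈ D, #A = #ι

/-- The sequences `f` (indexed by `T₁`) and `g` (indexed by `T₂`) represent a
`(T₁, T₂)`-cut of the ultrapower `J^ι/D`: `f` is `<_D`-increasing, `g` is `<_D`-decreasing,
every `f a` is `<_D`-below every `g b`, and no element fills the cut. -/
def RepCut {ι J : Type} [LinearOrder J] {T₁ T₂ : Type} [LinearOrder T₁] [LinearOrder T₂]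
    (D : Ultrafilter ι) (f : T₁ → ι → J) (g : T₂ → ι → J) : Prop :=
  (∀ a b : T₁, a < b → ltD D (f a) (f b)) ∧
  (∀ a b : T₂, a < b → ltD D (g b) (g a)) ∧
  (∀ (a : T₁) (b : T₂), ltD D (f a) (g b)) ∧
  ¬∃ h : ι → J, (∀ a : T₁, ltD D (f a) h) ∧ ∀ b : T₂, ltD D h (g b)

/-- `τ⁺`-saturation of a dense linear order: any two sets of size `≤ τ`, one entirely
below the other, can be separated by a point. -/
def SatPlus (τ : Cardinal) (J : Type) [LinearOrder J] : Prop :=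
  ∀ A B : Set J, #A ≤ τ → #B ≤ τ → (∀ a ∈ A, ∀ b ∈ B, a < b) →
    ∃ t : J, (∀ a ∈ A, a < t) ∧ ∀ b ∈ B, t < b

/-- The order type of a set of ordinals. -/
noncomputable def setOtp (C : Set Ordinal.{0}) : Ordinal.{1} :=
  Ordinal.type (Subrel ((· < ·) : Ordinal.{0} → Ordinal.{0} → Prop) (· ∈ C))

/-- `C` is a club (closed unbounded) subset of `l`. -/
def IsClubIn (l : Ordinal) (C : Set Ordinal) : Prop :=
  C ⊆ Set.Iio l ∧
  (∀ s : Set Ordinal, s ⊆ C → s.Nonempty → sSup s < l → sSup s ∈ C) ∧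
  ∀ a < l, ∃ b ∈ C, a < b

/-- `S` is stationary in `l`: it meets every club of `l`. -/
def IsStationaryIn (l : Ordinal) (S : Set Ordinal) : Prop :=
  ∀ C : Set Ordinal, IsClubIn l C → (S ∩ C).Nonempty

/-- The non-accumulation points of a set of ordinals. -/
noncomputable def nacc (C : Set Ordinal) : Set Ordinal :=
  {β ∈ C | sSup (C ∩ Set.Iio β) < β}


section Lemma43Aux

namespace STT

theorem bddIio {A : Set Ordinal.{0}} {o : Ordinal.{0}} (h : ∀ a ∈ A, a < o) : BddAbove A :=
  ⟨o, fun a ha => (h a ha).le⟩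

theorem sSup_lt_of_card_lt {o : Ordinal.{0}} {A : Set Ordinal.{0}}
    (hA : ∀ a ∈ A, a < o) (hcard : #A < Cardinal.lift.{1} o.cof) : sSup A < o := by
  have hsub : A ⊆ Iio o := fun a ha => hA a ha
  have hsmall : Small.{0} A := small_subset hsub
  set f : Shrink.{0} ↥A → Ordinal.{0} := fun z => ((equivShrink ↥A).symm z : Ordinal) with hf
  have hrange : Set.range f = A := by
    ext x
    constructor
    · rintro ⟨z, rfl⟩; exact ((equivShrink ↥A).symm z).2
    · intro hx
      exact ⟨equivShrink ↥A ⟨x, hx⟩, by simp [hf]⟩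
  have hcard' : #(Shrink.{0} ↥A) < o.cof := by
    have := Cardinal.lift_mk_shrink'.{1, 0} ↥A
    rw [Cardinal.lift_id'] at this
    have h2 : Cardinal.lift.{1} #(Shrink.{0} ↥A) < Cardinal.lift.{1} o.cof := by
      rw [this]; exact hcard
    exact_mod_cast Cardinal.lift_lt.mp h2
  have := Ordinal.iSup_lt_ord (f := f) hcard' (fun i => hA _ (by rw [← hrange]; exact ⟨i, rfl⟩))
  calc sSup A = sSup (Set.range f) := by rw [hrange]
    _ = iSup f := rfl
    _ < o := this

theorem succ_lt_lam {lam : Cardinal.{0}} (hreg : lam.IsRegular) {a : Ordinal.{0}}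
    (h : a < lam.ord) : a + 1 < lam.ord := by
  have := (Cardinal.isSuccLimit_ord hreg.1).succ_lt h
  simpa [Order.succ_eq_add_one] using this

theorem clubTail {lam : Cardinal.{0}} (hreg : lam.IsRegular) {a : Ordinal.{0}}
    (ha : a < lam.ord) : IsClubIn lam.ord {x | a < x ∧ x < lam.ord} := by
  refine ⟨fun x hx => hx.2, ?_, ?_⟩
  · intro s hs hne hlt
    obtain ⟨y, hy⟩ := hne
    exact ⟨lt_of_lt_of_le (hs hy).1 (le_csSup (bddIio (fun z hz => (hs hz).2)) hy), hlt⟩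
  · intro b hb
    refine ⟨max a b + 1, ⟨?_, succ_lt_lam hreg (max_lt ha hb)⟩, ?_⟩
    · exact lt_of_le_of_lt (le_max_left _ _) (lt_add_one _)
    · exact lt_of_le_of_lt (le_max_right _ _) (lt_add_one _)

theorem clubInter {lam : Cardinal.{0}} (hreg : lam.IsRegular) (hω : ℵ₀ < lam)
    {ι : Type 1} [Nonempty ι] {C : ι → Set Ordinal.{0}}
    (hC : ∀ i, IsClubIn lam.ord (C i)) (hcard : #ι < Cardinal.lift.{1} lam) :
    IsClubIn lam.ord (⋂ i, C i) := by
  have hlcof : Cardinal.lift.{1} (lam.ord).cof = Cardinal.lift.{1} lam := by rw [hreg.cof_eq]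
  refine ⟨fun x hx => (hC (Classical.arbitrary ι)).1 (mem_iInter.1 hx _), ?_, ?_⟩
  · intro s hs hne hlt
    exact mem_iInter.2 fun i => (hC i).2.1 s (fun x hx => mem_iInter.1 (hs hx) i) hne hlt
  · intro a ha
    have hg : ∀ i : ι, ∀ b : Ordinal, b < lam.ord → ∃ y, y ∈ C i ∧ b < y ∧ y < lam.ord := by
      intro i b hb
      obtain ⟨y, hy, hby⟩ := (hC i).2.2 b hb
      exact ⟨y, hy, hby, (hC i).1 hy⟩
    set g : ι → Ordinal → Ordinal := fun i b =>
      if h : b < lam.ord then Classical.choose (hg i b h) else 0 with hgdef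
    have hgspec : ∀ i b, b < lam.ord → g i b ∈ C i ∧ b < g i b ∧ g i b < lam.ord := by
      intro i b hb
      simp only [hgdef, dif_pos hb]
      exact Classical.choose_spec (hg i b hb)
    set F : Ordinal → Ordinal := fun b => sSup (Set.range fun i => g i b) with hF
    have hFlt : ∀ b, b < lam.ord → F b < lam.ord := by
      intro b hb
      apply sSup_lt_of_card_lt
      · rintro y ⟨i, rfl⟩; exact (hgspec i b hb).2.2
      · rw [hlcof]; exact lt_of_le_of_lt mk_range_le hcard
    have hFgt : ∀ b, b < lam.ord → b < F b := by
      intro b hb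
      have i0 := Classical.arbitrary ι
      refine lt_of_lt_of_le (hgspec i0 b hb).2.1 (le_csSup ?_ ⟨i0, rfl⟩)
      exact bddIio (by rintro y ⟨i, rfl⟩; exact (hgspec i b hb).2.2)
    set seq : ℕ → Ordinal := fun n => Nat.rec a (fun _ b => F b) n with hseqdef
    have hseq : ∀ n, seq n < lam.ord := by
      intro n; induction n with
      | zero => exact ha
      | succ n ih => exact hFlt _ ih
    have hseqmono : ∀ n, seq n < seq (n + 1) := fun n => hFgt _ (hseq n)
    set G : Ordinal := sSup (Set.range (fun n : ULift.{1} ℕ => seq n.down)) with hGdef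
    have hGbdd : BddAbove (Set.range (fun n : ULift.{1} ℕ => seq n.down)) :=
      bddIio (by rintro y ⟨n, rfl⟩; exact hseq n.down)
    have hseqle : ∀ n, seq n ≤ G := fun n => le_csSup hGbdd ⟨⟨n⟩, rfl⟩
    have hGlt : G < lam.ord := by
      apply sSup_lt_of_card_lt
      · rintro y ⟨n, rfl⟩; exact hseq n.down
      · rw [hlcof]
        refine lt_of_le_of_lt mk_range_le (lt_of_le_of_lt mk_le_aleph0 ?_)
        exact_mod_cast (Cardinal.lift_lt.{0,1}.mpr hω).trans_le' (by simp)
    refine ⟨G, mem_iInter.2 fun i => ?_, lt_of_lt_of_le (hseqmono 0) (hseqle 1)⟩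
    -- G is the sup of the i-th chosen points
    set s : Set Ordinal := Set.range (fun n : ULift.{1} ℕ => g i (seq n.down)) with hsdef
    have hssub : s ⊆ C i := by rintro y ⟨n, rfl⟩; exact (hgspec i _ (hseq n.down)).1
    have hslt : ∀ y ∈ s, y < lam.ord := by rintro y ⟨n, rfl⟩; exact (hgspec i _ (hseq n.down)).2.2
    have hsup : sSup s = G := by
      apply le_antisymm
      · apply csSup_le (Set.range_nonempty _)
        rintro y ⟨n, rfl⟩
        calc g i (seq n.down) ≤ F (seq n.down) := le_csSup
              (bddIio (by rintro y ⟨i', rfl⟩; exact (hgspec i' _ (hseq n.down)).2.2)) ⟨i, rfl⟩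
          _ = seq (n.down + 1) := rfl
          _ ≤ G := hseqle (n.down + 1)
      · apply csSup_le (Set.range_nonempty _)
        rintro y ⟨n, rfl⟩
        calc seq n.down ≤ g i (seq n.down) := (hgspec i _ (hseq n.down)).2.1.le
          _ ≤ sSup s := le_csSup (bddIio hslt) ⟨n, rfl⟩
    have := (hC i).2.1 s hssub (Set.range_nonempty _) (by rw [hsup]; exact hGlt)
    rwa [hsup] at this

end STT

namespace STT2
open STT

theorem mk_Iio_lt {lam : Cardinal.{0}} {b : Ordinal.{0}} (hb : b < lam.ord) :
    #(Set.Iio b) < Cardinal.lift.{1} lam := by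
  rw [Ordinal.mk_Iio_ordinal]
  exact Cardinal.lift_lt.2 (Cardinal.lt_ord.1 hb)

/-- closure points of a function form a club -/
theorem clubClosure {lam : Cardinal.{0}} (hreg : lam.IsRegular) (hω : ℵ₀ < lam)
    {G : Ordinal.{0} → Ordinal.{0}} (hG : ∀ β < lam.ord, G β < lam.ord) :
    IsClubIn lam.ord {γ | γ < lam.ord ∧ ∀ β < γ, G β < γ} := by
  have hlcof : Cardinal.lift.{1} (lam.ord).cof = Cardinal.lift.{1} lam := by rw [hreg.cof_eq]
  refine ⟨fun x hx => hx.1, ?_, ?_⟩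
  · intro s hs hne hlt
    refine ⟨hlt, fun β hβ => ?_⟩
    obtain ⟨x, hx, hβx⟩ := exists_lt_of_lt_csSup hne hβ
    exact lt_of_lt_of_le ((hs hx).2 β hβx) (le_csSup (bddIio fun z hz => (hs hz).1) hx)
  · intro a ha
    set F : Ordinal → Ordinal := fun b =>
      max (b + 1) (sSup ((fun β => G β + 1) '' (Iio b)) + 1) with hF
    have hFlt : ∀ b, b < lam.ord → F b < lam.ord := by
      intro b hb
      apply max_lt (succ_lt_lam hreg hb)
      apply succ_lt_lam hreg
      apply sSup_lt_of_card_lt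
      · rintro y ⟨β, hβ, rfl⟩; exact succ_lt_lam hreg (hG β (hβ.trans hb))
      · rw [hlcof]; exact lt_of_le_of_lt mk_image_le (mk_Iio_lt hb)
    set seq : ℕ → Ordinal := fun n => Nat.rec (a + 1) (fun _ b => F b) n with hseqdef
    have hseq : ∀ n, seq n < lam.ord := by
      intro n; induction n with
      | zero => exact succ_lt_lam hreg ha
      | succ n ih => exact hFlt _ ih
    have hseqmono : ∀ n, seq n < seq (n + 1) := by
      intro n
      exact lt_of_lt_of_le (lt_add_one _) (le_max_left _ _)
    set W : Ordinal := sSup (Set.range (fun n : ULift.{1} ℕ => seq n.down)) with hW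
    have hWbdd : BddAbove (Set.range (fun n : ULift.{1} ℕ => seq n.down)) :=
      bddIio (by rintro y ⟨n, rfl⟩; exact hseq n.down)
    have hseqle : ∀ n, seq n ≤ W := fun n => le_csSup hWbdd ⟨⟨n⟩, rfl⟩
    have hWlt : W < lam.ord := by
      apply sSup_lt_of_card_lt
      · rintro y ⟨n, rfl⟩; exact hseq n.down
      · rw [hlcof]
        refine lt_of_le_of_lt mk_range_le (lt_of_le_of_lt mk_le_aleph0 ?_)
        exact_mod_cast (Cardinal.lift_lt.{0,1}.mpr hω).trans_le' (by simp)
    refine ⟨W, ⟨hWlt, fun β hβ => ?_⟩, lt_of_lt_of_le (lt_add_one a) (hseqle 0)⟩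
    obtain ⟨y, ⟨n, rfl⟩, hβy⟩ := exists_lt_of_lt_csSup (Set.range_nonempty _) hβ
    have h1 : G β + 1 ≤ sSup ((fun β => G β + 1) '' (Iio (seq n.down))) := by
      apply le_csSup
      · apply bddIio (o := lam.ord)
        rintro z ⟨γ, hγ, rfl⟩
        exact succ_lt_lam hreg (hG γ (hγ.trans (hseq n.down)))
      · exact ⟨β, hβy, rfl⟩
    calc G β < G β + 1 := lt_add_one _
      _ ≤ sSup ((fun β => G β + 1) '' (Iio (seq n.down))) := h1
      _ < F (seq n.down) := lt_of_lt_of_le (lt_add_one _) (le_max_right _ _)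
      _ = seq (n.down + 1) := rfl
      _ ≤ W := hseqle (n.down + 1)

theorem statUnbounded {lam : Cardinal.{0}} (hreg : lam.IsRegular) {S : Set Ordinal.{0}}
    (hS : IsStationaryIn lam.ord S) {a : Ordinal.{0}} (ha : a < lam.ord) :
    ∃ x ∈ S, a < x ∧ x < lam.ord := by
  obtain ⟨x, hxS, hx⟩ := hS _ (clubTail hreg ha)
  exact ⟨x, hxS, hx.1, hx.2⟩

theorem statCard {lam : Cardinal.{0}} (hreg : lam.IsRegular) {S : Set Ordinal.{0}}
    (hsub : S ⊆ Set.Iio lam.ord) (hS : IsStationaryIn lam.ord S) :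
    #S = Cardinal.lift.{1} lam := by
  refine le_antisymm ?_ ?_
  · calc #S ≤ #(Set.Iio lam.ord) := mk_le_mk_of_subset hsub
      _ = Cardinal.lift.{1} (lam.ord.card) := Ordinal.mk_Iio_ordinal _
      _ = Cardinal.lift.{1} lam := by rw [Cardinal.card_ord]
  · by_contra hlt
    push_neg at hlt
    have hsup : sSup S < lam.ord := by
      apply sSup_lt_of_card_lt (fun a ha => hsub ha)
      rw [hreg.cof_eq]; exact hlt
    obtain ⟨x, hxS, hx, _⟩ := statUnbounded hreg hS hsup
    exact absurd (le_csSup (bddIio fun a ha => hsub ha) hxS) (not_le.2 hx)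

theorem statInterClub {lam : Cardinal.{0}} (hreg : lam.IsRegular) (hω : ℵ₀ < lam)
    {S C : Set Ordinal.{0}} (hS : IsStationaryIn lam.ord S) (hC : IsClubIn lam.ord C) :
    IsStationaryIn lam.ord (S ∩ C) := by
  intro D hD
  set E : ULift.{1} Bool → Set Ordinal.{0} := fun b => if b.down then C else D with hE
  have hEclub : ∀ b, IsClubIn lam.ord (E b) := by
    rintro ⟨b⟩; cases b <;> simpa [hE] using (by assumption)
  have hinter : (⋂ b, E b) = C ∩ D := by
    ext x
    simp only [mem_iInter, mem_inter_iff]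
    constructor
    · intro h; exact ⟨by simpa [hE] using h ⟨true⟩, by simpa [hE] using h ⟨false⟩⟩
    · rintro ⟨h1, h2⟩ ⟨b⟩; cases b <;> simpa [hE]
  have := hS _ (by
    have := clubInter hreg hω hEclub (lt_of_le_of_lt mk_le_aleph0
      (by exact_mod_cast (Cardinal.lift_lt.{0,1}.mpr hω).trans_le' (by simp)))
    rwa [hinter] at this)
  obtain ⟨x, hxS, hxC, hxD⟩ := this
  exact ⟨x, ⟨hxS, hxC⟩, hxD⟩

theorem statPartition {lam : Cardinal.{0}} (hreg : lam.IsRegular) (hω : ℵ₀ < lam)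
    {S : Set Ordinal.{0}} (hS : IsStationaryIn lam.ord S)
    {b : Ordinal.{0}} (hb : 0 < b) (hblam : b.card < lam)
    {f : Ordinal.{0} → Ordinal.{0}} (hf : ∀ α ∈ S, f α < b) :
    ∃ j < b, IsStationaryIn lam.ord {α | α ∈ S ∧ f α = j} := by
  by_contra hcon
  push_neg at hcon
  have hch : ∀ j : ↥(Set.Iio b), ∃ D, IsClubIn lam.ord D ∧
      ({α | α ∈ S ∧ f α = j.1} ∩ D) = ∅ := by
    rintro ⟨j, hj⟩
    have := hcon j hj
    unfold IsStationaryIn at this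
    push_neg at this
    obtain ⟨D, hD, hDe⟩ := this
    exact ⟨D, hD, hDe⟩
  choose D hDclub hDe using hch
  have : Nonempty ↥(Set.Iio b) := ⟨⟨0, hb⟩⟩
  have hcard : #(↥(Set.Iio b)) < Cardinal.lift.{1} lam := by
    rw [Ordinal.mk_Iio_ordinal]; exact Cardinal.lift_lt.2 hblam
  obtain ⟨x, hxS, hxD⟩ := hS _ (clubInter hreg hω hDclub hcard)
  have hfx : f x < b := hf x hxS
  have : x ∈ D ⟨f x, hfx⟩ := mem_iInter.1 hxD _
  have : x ∈ ({α | α ∈ S ∧ f α = f x} ∩ D ⟨f x, hfx⟩) := ⟨⟨hxS, rfl⟩, this⟩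
  rw [hDe ⟨f x, hfx⟩] at this
  exact this

/-- pigeonhole for colours on a set unbounded below `δ` -/
theorem colorUnbounded {δ b : Ordinal.{0}} {Y : Set Ordinal.{0}}
    (hYδ : Y ⊆ Set.Iio δ) (hY : ∀ η < δ, ∃ y ∈ Y, η < y)
    {f : Ordinal.{0} → Ordinal.{0}} (hf : ∀ y ∈ Y, f y < b)
    (hb : Cardinal.lift.{1} b.card < Cardinal.lift.{1} δ.cof) :
    ∃ j < b, ∀ η < δ, ∃ y ∈ Y, η < y ∧ f y = j := by
  by_contra hcon
  push_neg at hcon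
  have hch : ∀ j : ↥(Set.Iio b), ∃ η, η < δ ∧ ∀ y ∈ Y, η < y → f y ≠ j.1 := by
    rintro ⟨j, hj⟩
    obtain ⟨η, hη, hηy⟩ := hcon j hj
    exact ⟨η, hη, hηy⟩
  choose eta hetalt hetaspec using hch
  have hsup : sSup (Set.range eta) < δ := by
    apply sSup_lt_of_card_lt
    · rintro y ⟨j, rfl⟩; exact hetalt j
    · refine lt_of_le_of_lt mk_range_le ?_
      rwa [Ordinal.mk_Iio_ordinal]
  obtain ⟨y, hyY, hy⟩ := hY _ hsup
  have hfy : f y < b := hf y hyY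
  have : eta ⟨f y, hfy⟩ ≤ sSup (Set.range eta) :=
    le_csSup (bddIio (by rintro z ⟨j, rfl⟩; exact hetalt j)) ⟨_, rfl⟩
  exact hetaspec ⟨f y, hfy⟩ y hyY (lt_of_le_of_lt this hy) rfl

end STT2

namespace STT3
open STT STT2

open scoped Classical in
theorem countW {lam σ κ μ : Cardinal.{0}} (hreg : lam.IsRegular)
    (hσ : ℵ₀ ≤ σ) (hσκ : σ < κ) (hσlam : σ < lam) (hμlam : μ < lam)
    (hsmall : ∀ α < lam.ord, α.card ^< κ < lam)
    (U : Set Ordinal.{0}) (B : Set Ordinal.{0} → Ordinal.{0} → Ordinal.{0})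
    {β : Ordinal.{0}} (hβ : β < lam.ord) :
    #{x : Ordinal.{0} | ∃ v ξ, v ⊆ U ∧ #v ≤ Cardinal.lift.{1} σ ∧ (∀ y ∈ v, y ≤ β) ∧
        ξ < μ.ord ∧ x = B v ξ + 1} < Cardinal.lift.{1} lam := by
  set V := {v : Set Ordinal.{0} // v ⊆ Set.Iic β ∧ #v ≤ Cardinal.lift.{1} σ} with hV
  set Ξ := ↥(Set.Iio μ.ord) with hΞ
  set F : V × Ξ → Ordinal.{0} := fun p => B p.1.1 p.2.1 + 1 with hF
  have hWsub : {x : Ordinal.{0} | ∃ v ξ, v ⊆ U ∧ #v ≤ Cardinal.lift.{1} σ ∧ (∀ y ∈ v, y ≤ β) ∧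
      ξ < μ.ord ∧ x = B v ξ + 1} ⊆ Set.range F := by
    rintro x ⟨v, ξ, hvU, hvc, hvβ, hξ, rfl⟩
    exact ⟨⟨⟨v, fun y hy => hvβ y hy, hvc⟩, ⟨ξ, hξ⟩⟩, rfl⟩
  have h1 : #{x : Ordinal.{0} | ∃ v ξ, v ⊆ U ∧ #v ≤ Cardinal.lift.{1} σ ∧ (∀ y ∈ v, y ≤ β) ∧
      ξ < μ.ord ∧ x = B v ξ + 1} ≤ #V * #Ξ := by
    refine le_trans (mk_le_mk_of_subset hWsub) (le_trans mk_range_le ?_)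
    rw [Cardinal.mk_prod, Cardinal.lift_id'.{1,1}, Cardinal.lift_id'.{1,1}]
  have hΞcard : #Ξ = Cardinal.lift.{1} μ := by
    rw [hΞ, Ordinal.mk_Iio_ordinal, Cardinal.card_ord]
  -- bound #V
  set T := ↥(Set.Iio σ.ord) with hT
  have hTcard : #T = Cardinal.lift.{1} σ := by
    rw [hT, Ordinal.mk_Iio_ordinal, Cardinal.card_ord]
  have hemb : ∀ v : V, Nonempty (↥v.1 ↪ T) := by
    intro v
    rw [← Cardinal.le_def, hTcard]
    exact v.2.2
  set emb : ∀ v : V, ↥v.1 ↪ T := fun v => Classical.choice (hemb v) with hembdef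
  set Φ : V → (T → Option ↥(Set.Iic β)) := fun v t =>
    if h : ∃ y : ↥v.1, emb v y = t then
      some ⟨(Classical.choose h).1, v.2.1 (Classical.choose h).2⟩ else none with hΦ
  have hrec : ∀ (v : V) (x : Ordinal.{0}),
      x ∈ v.1 ↔ ∃ t w, Φ v t = some w ∧ w.1 = x := by
    intro v x
    constructor
    · intro hx
      refine ⟨emb v ⟨x, hx⟩, ?_⟩
      have h : ∃ y : ↥v.1, emb v y = emb v ⟨x, hx⟩ := ⟨⟨x, hx⟩, rfl⟩
      have hy : Classical.choose h = ⟨x, hx⟩ := (emb v).injective (Classical.choose_spec h)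
      refine ⟨⟨(Classical.choose h).1, v.2.1 (Classical.choose h).2⟩, ?_, by rw [hy]⟩
      simp only [hΦ, dif_pos h]
    · rintro ⟨t, w, hw, rfl⟩
      simp only [hΦ] at hw
      split_ifs at hw with h
      case pos =>
        have h2 := Option.some.inj hw
        rw [← h2]
        exact (Classical.choose h).2
      all_goals try exact absurd hw (by simp)
  have hΦinj : Function.Injective Φ := by
    intro v₁ v₂ hfe
    apply Subtype.ext
    ext x
    rw [hrec v₁ x, hrec v₂ x, hfe]
  have hVle : #V ≤ (#(↥(Set.Iic β)) + 1) ^ Cardinal.lift.{1} σ := by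
    calc #V ≤ #(T → Option ↥(Set.Iic β)) := Cardinal.mk_le_of_injective hΦinj
      _ = #(Option ↥(Set.Iic β)) ^ #T := (Cardinal.power_def _ _).symm
      _ = (#(↥(Set.Iic β)) + 1) ^ Cardinal.lift.{1} σ := by rw [Cardinal.mk_option, hTcard]
  have hIic : (Set.Iic β) = Set.Iio (β + 1) := by
    ext x
    simp [Order.lt_add_one_iff]
  have hβ1 : β + 1 < lam.ord := succ_lt_lam hreg hβ
  set ν := (β + 1).card with hν
  have hνlam : ν < lam := Cardinal.lt_ord.1 hβ1
  have hbound : (ν + 1) ^ σ < lam := by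
    have hνσ : ℵ₀ ≤ ν ⊔ σ := le_trans hσ le_sup_right
    have h1 : ν + 1 ≤ ν ⊔ σ := by
      calc ν + 1 ≤ (ν ⊔ σ) + (ν ⊔ σ) :=
            add_le_add le_sup_left (le_trans (le_trans Cardinal.one_le_aleph0 hσ) le_sup_right)
        _ = ν ⊔ σ := Cardinal.add_eq_self hνσ
    have h3 : ν ^ σ < lam :=
      lt_of_le_of_lt (Cardinal.le_powerlt ν hσκ) (hsmall (β + 1) hβ1)
    have h4 : σ ^ σ < lam := by
      have := hsmall σ.ord (Cardinal.ord_lt_ord.2 hσlam)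
      rw [Cardinal.card_ord] at this
      exact lt_of_le_of_lt (Cardinal.le_powerlt σ hσκ) this
    have h2 : (ν ⊔ σ) ^ σ < lam := by
      rcases le_total ν σ with h | h
      · rwa [sup_eq_right.2 h]
      · rwa [sup_eq_left.2 h]
    exact lt_of_le_of_lt (Cardinal.power_le_power_right h1) h2
  have hVlt : #V < Cardinal.lift.{1} lam := by
    refine lt_of_le_of_lt hVle ?_
    have : #(↥(Set.Iic β)) + 1 = Cardinal.lift.{1} (ν + 1) := by
      rw [hIic, Ordinal.mk_Iio_ordinal, Cardinal.lift_add, Cardinal.lift_one, hν]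
    rw [this, ← Cardinal.lift_power]
    exact Cardinal.lift_lt.2 hbound
  refine lt_of_le_of_lt h1 ?_
  apply Cardinal.mul_lt_of_lt
  · simpa using hreg.1
  · exact hVlt
  · rw [hΞcard]; exact Cardinal.lift_lt.2 hμlam

end STT3


end Lemma43Aux

section MainProof

open STT STT2 STT3

/-- Lemma 4.3: if `σ < κ ≤ μ < λ` with `κ, λ` regular, `|α|^{<κ} < λ` for
`α < λ`, and every colouring `τ : λ × λ → σ` admits data as in Lemma 4.1, then the
principle `(*)^{2,2}_{λ,σ}` holds. -/
theorem star_two_two_of_guessing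
    (σ κ μ lam : Cardinal.{0})
    (hσ : ℵ₀ ≤ σ) (hσκ : σ < κ) (hκμ : κ ≤ μ) (hμlam : μ < lam)
    (hκreg : κ.IsRegular) (hlamreg : lam.IsRegular)
    (hsmall : ∀ α < lam.ord, α.card ^< κ < lam)
    (hdata : ∀ tau : Ordinal → Ordinal → Ordinal,
      (∀ α < lam.ord, ∀ β < lam.ord, tau α β < σ.ord) →
      ∃ U : Set Ordinal, U ⊆ {α | α < lam.ord ∧ κ ≤ α.cof} ∧ IsStationaryIn lam.ord U ∧
        ∃ tau1 : Ordinal → Ordinal, (∀ α ∈ U, tau1 α < σ.ord) ∧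
          ∃ B : Set Ordinal → Ordinal → Ordinal,
            (∀ v : Set Ordinal, v ⊆ U → #v < Cardinal.lift.{1} κ → ∀ ξ < μ.ord,
              sSup v < B v ξ ∧ B v ξ < lam.ord) ∧
            (∀ v : Set Ordinal, v ⊆ U → #v < Cardinal.lift.{1} κ →
              ∃ ξ < μ.ord, ∀ α ∈ v, tau α (B v ξ) = tau1 α)) :
    ∀ c : Ordinal → Ordinal → Ordinal,
      (∀ α β : Ordinal, α < β → β < lam.ord → c α β < σ.ord) →
      ∃ u : Set Ordinal, u ⊆ Set.Iio σ.ord ∧ #u ≤ 2 ∧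
        ∃ S : Set Ordinal, S ⊆ Set.Iio lam.ord ∧ #S = Cardinal.lift.{1} lam ∧
          ∀ α ∈ S, ∀ β ∈ S, α < β →
            ∃ n : ℕ, n ≤ 2 ∧ ∃ γ : Fin (n + 1) → Ordinal, StrictMono γ ∧
              γ 0 = α ∧ γ (Fin.last n) = β ∧
              ∀ l : Fin n, c (γ l.castSucc) (γ l.succ) ∈ u := by
  classical
  intro c hc
  have hσlam : σ < lam := hσκ.trans_le (hκμ.trans hμlam.le)
  have hωlam : ℵ₀ < lam := lt_of_le_of_lt hσ hσlam
  have hσord : (0 : Ordinal) < σ.ord := by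
    rw [← Cardinal.ord_zero]
    exact Cardinal.ord_lt_ord.2 (lt_of_lt_of_le aleph0_pos hσ)
  -- the colouring fed to the guessing principle
  set tau : Ordinal → Ordinal → Ordinal :=
    fun α β => if α < β ∧ β < lam.ord then c α β else 0 with htaudef
  have htau : ∀ α < lam.ord, ∀ β < lam.ord, tau α β < σ.ord := by
    intro α _ β _
    by_cases h : α < β ∧ β < lam.ord
    · simpa [htaudef, h] using hc α β h.1 h.2
    · simpa [htaudef, h] using hσord
  obtain ⟨U, hU1, hU2, tau1, htau1, B, hB1, hB2⟩ := hdata tau htau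
  -- Step 1: a stationary colour class of tau1
  obtain ⟨i, hiσ, hS₁⟩ := statPartition hlamreg hωlam hU2 hσord
    (by rw [Cardinal.card_ord]; exact hσlam) htau1
  set S₁ : Set Ordinal := {α | α ∈ U ∧ tau1 α = i} with hS₁def
  have hS₁U : S₁ ⊆ U := fun α hα => hα.1
  have hS₁sub : S₁ ⊆ Set.Iio lam.ord := fun α hα => (hU1 (hS₁U hα)).1
  have hS₁cof : ∀ α ∈ S₁, κ ≤ α.cof := fun α hα => (hU1 (hS₁U hα)).2
  -- Step 2: the closure club
  have hnext : ∀ b : Ordinal, b < lam.ord → ∃ x, x ∈ S₁ ∧ b < x ∧ x < lam.ord := by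
    intro b hb
    obtain ⟨x, hx, h1, h2⟩ := statUnbounded hlamreg hS₁ hb
    exact ⟨x, hx, h1, h2⟩
  set nxt : Ordinal → Ordinal := fun b =>
    if h : b < lam.ord then Classical.choose (hnext b h) else 0 with hnxtdef
  have hnxt : ∀ b, b < lam.ord → nxt b ∈ S₁ ∧ b < nxt b ∧ nxt b < lam.ord := by
    intro b hb
    simp only [hnxtdef, dif_pos hb]
    exact Classical.choose_spec (hnext b hb)
  set bW : Ordinal → Set Ordinal := fun b =>
    {x | ∃ v ξ, v ⊆ U ∧ #v ≤ Cardinal.lift.{1} σ ∧ (∀ y ∈ v, y ≤ b) ∧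
      ξ < μ.ord ∧ x = B v ξ + 1} with hbWdef
  have hbWlt : ∀ b, b < lam.ord → ∀ x ∈ bW b, x < lam.ord := by
    rintro b hb x ⟨v, ξ, hvU, hvc, hvb, hξ, rfl⟩
    exact succ_lt_lam hlamreg
      (hB1 v hvU (hvc.trans_lt (Cardinal.lift_lt.2 hσκ)) ξ hξ).2
  set G : Ordinal → Ordinal := fun b => max (nxt b) (sSup (bW b)) with hGdef
  have hG : ∀ b, b < lam.ord → G b < lam.ord := by
    intro b hb
    apply max_lt (hnxt b hb).2.2
    apply sSup_lt_of_card_lt (hbWlt b hb)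
    rw [hlamreg.cof_eq]
    exact countW hlamreg hσ hσκ hσlam hμlam hsmall U B hb
  set C : Set Ordinal := {γ | γ < lam.ord ∧ ∀ β < γ, G β < γ} with hCdef
  have hCclub : IsClubIn lam.ord C := clubClosure hlamreg hωlam hG
  have hSstar : IsStationaryIn lam.ord (S₁ ∩ C) := statInterClub hlamreg hωlam hS₁ hCclub
  -- basic facts inside a point of S₁ ∩ C
  have hKP1 : ∀ δ ∈ C, ∀ η < δ, ∃ x, x ∈ S₁ ∧ η < x ∧ x < δ := by
    intro δ hδ η hη
    have hηl : η < lam.ord := hη.trans hδ.1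
    refine ⟨nxt η, (hnxt η hηl).1, (hnxt η hηl).2.1, ?_⟩
    exact lt_of_le_of_lt (le_max_left _ _) (hδ.2 η hη)
  have hKP2 : ∀ δ ∈ C, ∀ v : Set Ordinal, v ⊆ U → #v ≤ Cardinal.lift.{1} σ →
      ∀ x < δ, (∀ y ∈ v, y ≤ x) → ∀ ξ < μ.ord, B v ξ < δ := by
    intro δ hδ v hvU hvc x hxδ hvx ξ hξ
    have hmem : B v ξ + 1 ∈ bW x := ⟨v, ξ, hvU, hvc, hvx, hξ, rfl⟩
    have hxl : x < lam.ord := hxδ.trans hδ.1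
    have h1 : B v ξ + 1 ≤ sSup (bW x) :=
      le_csSup ⟨lam.ord, fun z hz => (hbWlt x hxl z hz).le⟩ hmem
    have h2 : sSup (bW x) ≤ G x := le_max_right _ _
    exact lt_of_lt_of_le (lt_add_one _) (h1.trans (h2.trans (hδ.2 x hxδ).le))
  -- the sets K δ of good colours
  set K : Ordinal → Set Ordinal := fun δ =>
    {j | j < σ.ord ∧ ∀ α, α ∈ S₁ → α < δ → ∀ η < δ,
      ∃ t, η < t ∧ α < t ∧ t < δ ∧ c α t = i ∧ c t δ = j} with hKdef
  -- Key Lemma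
  have hKey : ∀ δ ∈ S₁ ∩ C, (K δ).Nonempty := by
    rintro δ ⟨hδS₁, hδC⟩
    by_contra hne
    rw [Set.not_nonempty_iff_eq_empty] at hne
    have hδl : δ < lam.ord := hS₁sub hδS₁
    have hδcof : κ ≤ δ.cof := hS₁cof δ hδS₁
    have hliftκcof : Cardinal.lift.{1} σ < Cardinal.lift.{1} δ.cof :=
      lt_of_lt_of_le (Cardinal.lift_lt.2 hσκ) (Cardinal.lift_le.2 hδcof)
    have hfail : ∀ j : ↥(Set.Iio σ.ord), ∃ α η, α ∈ S₁ ∧ α < δ ∧ η < δ ∧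
        ∀ t, η < t → α < t → t < δ → c α t = i → c t δ ≠ j.1 := by
      rintro ⟨j, hj⟩
      have hQ : ¬ (∀ α, α ∈ S₁ → α < δ → ∀ η < δ,
          ∃ t, η < t ∧ α < t ∧ t < δ ∧ c α t = i ∧ c t δ = j) := by
        intro hQ
        have : j ∈ K δ := ⟨hj, hQ⟩
        rw [hne] at this
        exact this
      push_neg at hQ
      obtain ⟨α, hα1, hα2, η, hη, hT⟩ := hQ
      exact ⟨α, η, hα1, hα2, hη, hT⟩
    choose wα wη hwS hwlt hwη hwT using hfail
    set R : Set Ordinal := Set.range (fun j => max (wα j) (wη j)) with hRdef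
    have hRlt : ∀ y ∈ R, y < δ := by rintro y ⟨j, rfl⟩; exact max_lt (hwlt j) (hwη j)
    have hρδ : sSup R < δ := by
      apply sSup_lt_of_card_lt hRlt
      refine lt_of_le_of_lt mk_range_le ?_
      rw [Ordinal.mk_Iio_ordinal, Cardinal.card_ord]
      exact hliftκcof
    set ρ := sSup R with hρdef
    have hRbdd : BddAbove R := bddIio hRlt
    have hwαρ : ∀ j, wα j ≤ ρ := fun j => le_trans (le_max_left _ _) (le_csSup hRbdd ⟨j, rfl⟩)
    have hwηρ : ∀ j, wη j ≤ ρ := fun j => le_trans (le_max_right _ _) (le_csSup hRbdd ⟨j, rfl⟩)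
    have hrange : #(Set.range wα) ≤ Cardinal.lift.{1} σ := by
      refine le_trans mk_range_le ?_
      rw [Ordinal.mk_Iio_ordinal, Cardinal.card_ord]
    have hmid : ∀ x, x ∈ S₁ → ρ < x → x < δ →
        ∃ t, x < t ∧ t < δ ∧ ∀ α ∈ insert x (Set.range wα), c α t = i := by
      intro x hxS hρx hxδ
      set v : Set Ordinal := insert x (Set.range wα) with hvdef
      have hvS₁ : ∀ y ∈ v, y ∈ S₁ := by
        rintro y (rfl | ⟨j, rfl⟩)
        · exact hxS
        · exact hwS j
      have hvU : v ⊆ U := fun y hy => hS₁U (hvS₁ y hy)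
      have hvx : ∀ y ∈ v, y ≤ x := by
        rintro y (rfl | ⟨j, rfl⟩)
        · exact le_rfl
        · exact (hwαρ j).trans hρx.le
      have hvc : #v ≤ Cardinal.lift.{1} σ := by
        refine le_trans mk_insert_le ?_
        calc #(Set.range wα) + 1 ≤ Cardinal.lift.{1} σ + 1 := add_le_add_left hrange 1
          _ = Cardinal.lift.{1} σ := Cardinal.add_one_eq (by simpa using hσ)
      have hvκ : #v < Cardinal.lift.{1} κ := hvc.trans_lt (Cardinal.lift_lt.2 hσκ)
      obtain ⟨ξ, hξ, hguess⟩ := hB2 v hvU hvκ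
      have hBp := hB1 v hvU hvκ ξ hξ
      have hxt : x < B v ξ :=
        lt_of_le_of_lt (le_csSup ⟨x, fun y hy => hvx y hy⟩ (Set.mem_insert _ _)) hBp.1
      refine ⟨B v ξ, hxt, hKP2 δ hδC v hvU hvc x hxδ hvx ξ hξ, ?_⟩
      intro α hα
      have h1 := hguess α hα
      have hαt : α < B v ξ := lt_of_le_of_lt (hvx α hα) hxt
      rw [htaudef] at h1
      simp only [hαt, hBp.2, and_self, if_true] at h1
      rw [h1]
      exact (hvS₁ α hα).2
    set m : Ordinal → Ordinal := fun x =>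
      if h : x ∈ S₁ ∧ ρ < x ∧ x < δ then Classical.choose (hmid x h.1 h.2.1 h.2.2) else 0
      with hmdef
    have hm : ∀ x, x ∈ S₁ → ρ < x → x < δ →
        x < m x ∧ m x < δ ∧ ∀ α ∈ insert x (Set.range wα), c α (m x) = i := by
      intro x h1 h2 h3
      have h : x ∈ S₁ ∧ ρ < x ∧ x < δ := ⟨h1, h2, h3⟩
      simp only [hmdef, dif_pos h]
      exact Classical.choose_spec (hmid x h.1 h.2.1 h.2.2)
    set Y : Set Ordinal := {t | ∃ x, (x ∈ S₁ ∧ ρ < x ∧ x < δ) ∧ t = m x} with hYdef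
    have hYδ : Y ⊆ Set.Iio δ := by
      rintro t ⟨x, hx, rfl⟩
      exact (hm x hx.1 hx.2.1 hx.2.2).2.1
    have hYunb : ∀ η < δ, ∃ y ∈ Y, η < y := by
      intro η hη
      obtain ⟨x, hxS, hx1, hx2⟩ := hKP1 δ hδC (max η ρ) (max_lt hη hρδ)
      have hρx : ρ < x := lt_of_le_of_lt (le_max_right _ _) hx1
      refine ⟨m x, ⟨x, ⟨hxS, hρx, hx2⟩, rfl⟩, ?_⟩
      exact lt_of_le_of_lt (le_max_left _ _) (hx1.trans (hm x hxS hρx hx2).1)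
    obtain ⟨j, hj, hjunb⟩ := colorUnbounded (f := fun t => c t δ) hYδ hYunb
      (fun y hy => hc y δ (hYδ hy) hδl)
      (by rw [Cardinal.card_ord]; exact hliftκcof)
    obtain ⟨y, hyY, hy1, hy2⟩ := hjunb (wη ⟨j, hj⟩) (hwη ⟨j, hj⟩)
    obtain ⟨x, hx, rfl⟩ := hyY
    have hmx := hm x hx.1 hx.2.1 hx.2.2
    refine hwT ⟨j, hj⟩ (m x) hy1 ?_ hmx.2.1 ?_ hy2
    · exact lt_trans (lt_of_le_of_lt (hwαρ ⟨j, hj⟩) hx.2.1) hmx.1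
    · exact hmx.2.2 _ (Set.mem_insert_iff.2 (Or.inr ⟨_, rfl⟩))
  -- Step 5 : uniformise the colour
  have hKmem : ∀ δ ∈ S₁ ∩ C, sInf (K δ) ∈ K δ := fun δ hδ => csInf_mem (hKey δ hδ)
  obtain ⟨j, hjσ, hSstat⟩ := statPartition hlamreg hωlam hSstar hσord
    (by rw [Cardinal.card_ord]; exact hσlam) (f := fun δ => sInf (K δ))
    (fun δ hδ => (hKmem δ hδ).1)
  set S : Set Ordinal := {δ | δ ∈ S₁ ∩ C ∧ sInf (K δ) = j} with hSdef
  have hSsub : S ⊆ Set.Iio lam.ord := fun δ hδ => hS₁sub hδ.1.1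
  refine ⟨{i, j}, ?_, ?_, S, hSsub, statCard hlamreg hSsub hSstat, ?_⟩
  · rintro x (rfl | rfl)
    · exact hiσ
    · exact hjσ
  · calc #({i, j} : Set Ordinal) ≤ #({j} : Set Ordinal) + 1 := Cardinal.mk_insert_le
      _ ≤ 1 + 1 := by rw [Cardinal.mk_singleton]
      _ = 2 := one_add_one_eq_two
  · intro α hα β hβ hαβ
    have hjK : j ∈ K β := by
      have := hKmem β hβ.1
      rwa [hβ.2] at this
    obtain ⟨t, ht1, ht2, ht3, ht4, ht5⟩ := hjK.2 α hα.1.1 (by exact hαβ) α hαβ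
    refine ⟨2, le_rfl, ![α, t, β], ?_, rfl, rfl, ?_⟩
    · rw [Fin.strictMono_iff_lt_succ]
      intro l
      fin_cases l <;> simp [ht2, ht3]
    · intro l
      fin_cases l <;> simp [ht4, ht5]

end MainProof
end

section
/- Let D be a nonprincipal ultrafilter on an infinite cardinal κ and let λ be a cardinal. Assume: for every function c from the 2-element subsets of λ into D, there exist a set S ⊆ λ of cardinality λ and sets A₀, A₁ ∈ D such that whenever α < β are both in S, there is an ordinal γ with α < γ < β, c{α, γ} = A₀ and c{γ, β} = A₁. Suppose ⟨B_i : i < κ⟩ is a family of Boolean algebras such that no B_i contains a strictly increasing sequence of length λ (i.e., Depth⁺(B_i) ≤ λ for every i < κ). Then the ultraproduct B = ∏_{i<κ} B_i / D contains no strictly increasing sequence of length λ (i.e., Depth⁺(B) ≤ λ). Equivalently, there is no sequence ⟨a_α : α < λ⟩ of elements of ∏_{i<κ} B_i such that for all α < β < λ, {i < κ : a_α(i) < a_β(i)} ∈ D. -/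
open Cardinal Set

/-- Corollary 4.11, abstracted: if every `D`-colouring of pairs from `λ`
admits a size-`λ` set `S` and colours `A₀, A₁ ∈ D` linking any two points of `S` through a
middle point, and each Boolean algebra `B i` has `Depth⁺ ≤ λ`, then the ultraproduct
`∏ B i / D` has `Depth⁺ ≤ λ`. -/
theorem depth_of_ultraproduct
    {ι : Type} [Infinite ι] (D : Ultrafilter ι) (hD : Nonprincipal D)
    (lam : Cardinal)
    (hpart : ∀ c : lam.ord.ToType → lam.ord.ToType → Set ι,
      (∀ a b, a < b → c a b ∈ D) →
      ∃ S : Set lam.ord.ToType, #S = lam ∧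
        ∃ A₀ ∈ D, ∃ A₁ ∈ D, ∀ a ∈ S, ∀ b ∈ S, a < b →
          ∃ m, a < m ∧ m < b ∧ c a m = A₀ ∧ c m b = A₁)
    (B : ι → Type) [∀ i, BooleanAlgebra (B i)]
    (hdepth : ∀ i, ¬∃ s : lam.ord.ToType → B i, StrictMono s) :
    ¬∃ a : lam.ord.ToType → ∀ i, B i,
      ∀ x y : lam.ord.ToType, x < y → {i | a x i < a y i} ∈ D := by
  rintro ⟨a, ha⟩
  classical
  obtain ⟨S, hScard, A₀, hA₀, A₁, hA₁, key⟩ :=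
    hpart (fun x y => if x < y then {i | a x i < a y i} else Set.univ) (by
      intro x y hxy
      simpa only [if_pos hxy] using ha x y hxy)
  obtain ⟨i, hi0, hi1⟩ :=
    Filter.nonempty_of_mem (Filter.inter_mem hA₀ hA₁ : A₀ ∩ A₁ ∈ (D : Filter ι))
  apply hdepth i
  haveI iwo1 : IsWellOrder lam.ord.ToType (· < ·) := isWellOrder_lt
  haveI iwo2 : IsWellOrder S (· < ·) := isWellOrder_lt
  have h1 : Ordinal.type ((· < ·) : lam.ord.ToType → lam.ord.ToType → Prop) ≤
      Ordinal.type ((· < ·) : S → S → Prop) := by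
    rw [Ordinal.type_toType, Cardinal.ord_le, Ordinal.card_type, hScard]
  obtain ⟨f⟩ := Ordinal.type_le_iff'.mp h1
  refine ⟨fun x => a ((f x : S) : lam.ord.ToType) i, ?_⟩
  intro x y hxy
  have hf : ((f x : S) : lam.ord.ToType) < ((f y : S) : lam.ord.ToType) := f.map_rel_iff.mpr hxy
  obtain ⟨m, hxm, hmy, h0, h1'⟩ := key _ (f x).2 _ (f y).2 hf
  have e0 : {j | a ((f x : S) : lam.ord.ToType) j < a m j} = A₀ := by
    rw [← h0]; exact (if_pos hxm).symm
  have e1 : {j | a m j < a ((f y : S) : lam.ord.ToType) j} = A₁ := by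
    rw [← h1']; exact (if_pos hmy).symm
  have p0 : a ((f x : S) : lam.ord.ToType) i < a m i := by rw [← e0] at hi0; exact hi0
  have p1 : a m i < a ((f y : S) : lam.ord.ToType) i := by rw [← e1] at hi1; exact hi1
  exact p0.trans p1
end

section
/- Let θ be a regular infinite cardinal, let σ = 2^{<θ} (so σ = sup{2^ν : ν < θ}), let λ be a regular cardinal with λ > σ, let U be a set, and let ⟨d_α : α < λ⟩ be a sequence of subsets of U, each of cardinality less than θ. Then there is a set u_* ⊆ U with |u_*| ≤ σ such that: whenever u is a set with u_* ⊆ u ⊆ U and |u| ≤ σ, and α < λ, there exists β with α ≤ β < λ such that d_β ∩ u ⊆ u_*. -/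
open Cardinal Set

/-- Claim 5.5, abstracted: for `θ` regular, `σ = 2^{<θ}`, `λ > σ` regular,
and a `λ`-sequence of subsets `d α ⊆ U` each of size `< θ`, there is `u₀ ⊆ U` of size
`≤ σ` such that for every `u ⊇ u₀` of size `≤ σ` and every index, some later index `b`
has `d b ∩ u ⊆ u₀`. -/
theorem delta_system_like_threshold
    (θ : Cardinal) (hθreg : θ.IsRegular)
    (σ : Cardinal) (hσ : σ = 2 ^< θ)
    (lam : Cardinal) (hlam : lam.IsRegular) (hσlam : σ < lam)
    (U : Type) (d : lam.ord.ToType → Set U) (hd : ∀ a, #(d a) < θ) :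
    ∃ u₀ : Set U, #u₀ ≤ σ ∧
      ∀ u : Set U, u₀ ⊆ u → #u ≤ σ →
        ∀ a : lam.ord.ToType, ∃ b, a ≤ b ∧ d b ∩ u ⊆ u₀ := by
  classical
  by_contra hcon
  push_neg at hcon
  choose w hw1 hw2 av haw using hcon
  have hθσ : θ ≤ σ := by
    by_contra h
    push_neg at h
    exact absurd ((Cardinal.cantor σ).trans_le ((Cardinal.le_powerlt 2 h).trans_eq hσ.symm))
      (lt_irrefl σ)
  have hσinf : ℵ₀ ≤ σ := hθreg.aleph0_le.trans hθσ
  have hwf : WellFounded ((· < ·) : θ.ord.ToType → θ.ord.ToType → Prop) := IsWellFounded.wf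
  let F : θ.ord.ToType → Set U := hwf.fix
    (fun i ih => if h : #(⋃ j : {j : θ.ord.ToType // j < i}, ih j j.2) ≤ σ then w _ h else ∅)
  let A : θ.ord.ToType → Set U := fun i => ⋃ j : {j : θ.ord.ToType // j < i}, F j
  have hFeq : ∀ i, F i = if h : #(A i) ≤ σ then w (A i) h else ∅ := fun i => hwf.fix_eq _ i
  have hFcard : ∀ i, #(F i) ≤ σ := fun i => hwf.induction (C := fun i => #(F i) ≤ σ) i (fun i IH => by
    show #(F i) ≤ σ
    rw [hFeq i]
    split_ifs with h
    · exact hw2 _ h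
    · simp)
  have hA : ∀ i, #(A i) ≤ σ := by
    intro i
    calc #(A i) ≤ Cardinal.sum (fun j : {j : θ.ord.ToType // j < i} => #(F j)) :=
        mk_iUnion_le_sum_mk
      _ ≤ Cardinal.sum (fun _ : {j : θ.ord.ToType // j < i} => σ) :=
        Cardinal.sum_le_sum _ _ (fun j => hFcard j)
      _ = #{j : θ.ord.ToType // j < i} * σ := Cardinal.sum_const' _ _
      _ ≤ σ * σ := by
          apply mul_le_mul' _ le_rfl
          exact (Cardinal.mk_subtype_le _).trans (by rw [Cardinal.mk_toType, Cardinal.card_ord]; exact hθσ)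
      _ = σ := Cardinal.mul_eq_self hσinf
  have hF : ∀ i, F i = w (A i) (hA i) := fun i => by rw [hFeq i, dif_pos (hA i)]
  -- find b above all thresholds
  let e := (Ordinal.ToType.mk (o := lam.ord))
  have hθcof : #θ.ord.ToType < lam.ord.cof := by
    rw [Cardinal.mk_toType, Cardinal.card_ord, hlam.cof_eq]
    exact hθσ.trans_lt hσlam
  have hsup : (⨆ i, ((e.symm (av (A i) (hA i)) : Set.Iio lam.ord) : Ordinal)) < lam.ord :=
    Ordinal.iSup_lt_ord hθcof (fun i => (e.symm (av (A i) (hA i))).2)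
  let b : lam.ord.ToType := e ⟨_, hsup⟩
  have hb : ∀ i, av (A i) (hA i) ≤ b := by
    intro i
    have h1 : e.symm (av (A i) (hA i)) ≤ ⟨_, hsup⟩ :=
      Ordinal.le_iSup (fun i => ((e.symm (av (A i) (hA i)) : Set.Iio lam.ord) : Ordinal)) i
    have := e.monotone h1
    rwa [e.apply_symm_apply] at this
  have hx : ∀ i, ∃ x, x ∈ d b ∩ F i ∧ x ∉ A i := by
    intro i
    have h1 := haw (A i) (hA i) b (hb i)
    rw [← hF i] at h1
    exact Set.not_subset.1 h1
  choose x hx1 hx2 using hx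
  have hinj : Function.Injective x := by
    intro i j hij
    by_contra hne
    rcases lt_or_gt_of_ne hne with h | h
    · exact hx2 j (hij ▸ Set.mem_iUnion.2 ⟨⟨i, h⟩, (hx1 i).2⟩)
    · exact hx2 i (hij ▸ Set.mem_iUnion.2 ⟨⟨j, h⟩, (hx1 j).2⟩)
  have hle : θ ≤ #(d b) := by
    have := Cardinal.mk_le_of_injective (f := fun i => (⟨x i, (hx1 i).1⟩ : d b))
      (fun i j h => hinj (congrArg Subtype.val h))
    rwa [Cardinal.mk_toType, Cardinal.card_ord] at this
  exact absurd (hd b) (not_lt.2 hle)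
end

section
/- Suppose κ > ℵ₀ and D is a κ-complete nonprincipal ultrafilter on the cardinal κ (so κ is measurable). Let θ₁, θ₂ be regular cardinals such that either θ₁ < κ, or both θ₁ ≤ κ and θ₂ ≤ κ. Then for every (θ₁+θ₂)⁺-saturated dense linear order J without endpoints, no pair of sequences of functions from κ to J represents a (θ₁, θ₂)-cut of J^κ/D. -/
open Cardinal Set

/-- Core lemma: if we can assign to each coordinate `i` "sections" `S₁ i ⊆ T₁`, `S₂ i ⊆ T₂`
such that pointwise the `f`-values on `S₁ i` lie below the `g`-values on `S₂ i`, and each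
index belongs to its section on a `D`-large set of coordinates, then (by saturation of `J`)
the pre-cut can be filled. -/
lemma fill_of_sections {ι J : Type} [LinearOrder J] {T₁ T₂ : Type}
    (D : Ultrafilter ι) (τ : Cardinal) (hsat : SatPlus τ J)
    (f : T₁ → ι → J) (g : T₂ → ι → J)
    (hT₁ : #T₁ ≤ τ) (hT₂ : #T₂ ≤ τ)
    (S₁ : ι → Set T₁) (S₂ : ι → Set T₂)
    (hord : ∀ i, ∀ a ∈ S₁ i, ∀ b ∈ S₂ i, f a i < g b i)
    (hS₁ : ∀ a, {i | a ∈ S₁ i} ∈ D) (hS₂ : ∀ b, {i | b ∈ S₂ i} ∈ D) :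
    ∃ h : ι → J, (∀ a, ltD D (f a) h) ∧ ∀ b, ltD D h (g b) := by
  have key : ∀ i, ∃ t : J, (∀ a ∈ S₁ i, f a i < t) ∧ ∀ b ∈ S₂ i, t < g b i := by
    intro i
    obtain ⟨t, ht1, ht2⟩ := hsat ((fun a => f a i) '' S₁ i) ((fun b => g b i) '' S₂ i)
      (le_trans (le_trans Cardinal.mk_image_le (Cardinal.mk_set_le _)) hT₁)
      (le_trans (le_trans Cardinal.mk_image_le (Cardinal.mk_set_le _)) hT₂)
      (by rintro x ⟨a, ha, rfl⟩ y ⟨b, hb, rfl⟩; exact hord i a ha b hb)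
    exact ⟨t, fun a ha => ht1 _ ⟨a, ha, rfl⟩, fun b hb => ht2 _ ⟨b, hb, rfl⟩⟩
  choose h h1 h2 using key
  refine ⟨h, fun a => ?_, fun b => ?_⟩
  · exact Filter.mem_of_superset (hS₁ a) (fun i hi => h1 i a hi)
  · exact Filter.mem_of_superset (hS₂ b) (fun i hi => h2 i b hi)

/-- Theorem 2.2: if `D` is a `κ`-complete nonprincipal ultrafilter on a
measurable cardinal `κ > ℵ₀`, and `θ₁, θ₂` are regular with `θ₁ < κ`, or `θ₁ ≤ κ` and
`θ₂ ≤ κ`, then for every `(θ₁+θ₂)⁺`-saturated dense linear order `J` without endpoints,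
no pair of sequences represents a `(θ₁, θ₂)`-cut of `J^κ/D`. -/
theorem no_small_cut_of_measurable
    {ι : Type} (D : Ultrafilter ι) (hD : Nonprincipal D)
    (hκ : ℵ₀ < #ι) (hcomp : IsCompleteUF #ι D)
    (θ₁ θ₂ : Cardinal) (hθ₁ : θ₁.IsRegular) (hθ₂ : θ₂.IsRegular)
    (hcase : θ₁ < #ι ∨ (θ₁ ≤ #ι ∧ θ₂ ≤ #ι))
    (J : Type) [LinearOrder J] [DenselyOrdered J] [NoMinOrder J] [NoMaxOrder J] [Nonempty J]
    (hsat : SatPlus (θ₁ + θ₂) J) :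
    ∀ (f : θ₁.ord.ToType → ι → J) (g : θ₂.ord.ToType → ι → J), ¬RepCut D f g := by
  intro f g hcut
  obtain ⟨-, -, hfg, hno⟩ := hcut
  apply hno
  have hT₁τ : #θ₁.ord.ToType ≤ θ₁ + θ₂ := by
    rw [Cardinal.mk_toType, Cardinal.card_ord]; exact self_le_add_right _ _
  have hT₂τ : #θ₂.ord.ToType ≤ θ₁ + θ₂ := by
    rw [Cardinal.mk_toType, Cardinal.card_ord]; exact self_le_add_left _ _
  -- case A: θ₁ < #ι
  have caseA : θ₁ < #ι →
      ∃ h : ι → J, (∀ a, ltD D (f a) h) ∧ ∀ b, ltD D h (g b) := by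
    intro hlt
    refine fill_of_sections D (θ₁ + θ₂) hsat f g hT₁τ hT₂τ
      (fun _ => Set.univ) (fun i => {b | ∀ a, f a i < g b i})
      (fun i a _ b hb => hb a) (fun a => Filter.univ_mem) (fun b => ?_)
    show {i | ∀ a, f a i < g b i} ∈ D
    have : {i | ∀ a, f a i < g b i} = ⋂₀ Set.range (fun a => {i | f a i < g b i}) := by
      ext i; simp [Set.mem_sInter]
    rw [this]
    refine hcomp _ (lt_of_le_of_lt Cardinal.mk_range_le ?_) ?_
    · rwa [Cardinal.mk_toType, Cardinal.card_ord]
    · rintro A ⟨a, rfl⟩; exact hfg a b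
  -- case B: θ₂ < #ι
  have caseB : θ₂ < #ι →
      ∃ h : ι → J, (∀ a, ltD D (f a) h) ∧ ∀ b, ltD D h (g b) := by
    intro hlt
    refine fill_of_sections D (θ₁ + θ₂) hsat f g hT₁τ hT₂τ
      (fun i => {a | ∀ b, f a i < g b i}) (fun _ => Set.univ)
      (fun i a ha b _ => ha b) (fun a => ?_) (fun b => Filter.univ_mem)
    show {i | ∀ b, f a i < g b i} ∈ D
    have : {i | ∀ b, f a i < g b i} = ⋂₀ Set.range (fun b => {i | f a i < g b i}) := by
      ext i; simp [Set.mem_sInter]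
    rw [this]
    refine hcomp _ (lt_of_le_of_lt Cardinal.mk_range_le ?_) ?_
    · rwa [Cardinal.mk_toType, Cardinal.card_ord]
    · rintro A ⟨b, rfl⟩; exact hfg a b
  rcases hcase with hlt | ⟨hle₁, hle₂⟩
  · exact caseA hlt
  rcases lt_or_eq_of_le hle₁ with hlt | heq₁
  · exact caseA hlt
  rcases lt_or_eq_of_le hle₂ with hlt | heq₂
  · exact caseB hlt
  -- case C: θ₁ = θ₂ = #ι
  have hθeq : θ₁ = θ₂ := heq₁.trans heq₂.symm
  subst hθeq
  -- now f g : θ₁.ord.ToType → ι → J, θ₁ = #ι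
  refine fill_of_sections D (θ₁ + θ₁) hsat f g hT₁τ hT₂τ
    (fun i => {a | ∀ x ≤ a, ∀ y ≤ a, f x i < g y i})
    (fun i => {a | ∀ x ≤ a, ∀ y ≤ a, f x i < g y i})
    (fun i a ha b hb => ?_) (fun a => ?_) (fun a => ?_)
  · rcases le_total a b with hab | hba
    · exact hb a hab b le_rfl
    · exact ha a le_rfl b hba
  all_goals {
    show {i | ∀ x ≤ a, ∀ y ≤ a, f x i < g y i} ∈ D
    have : {i | ∀ x ≤ a, ∀ y ≤ a, f x i < g y i} =
        ⋂₀ Set.range (fun p : {x // x ≤ a} × {y // y ≤ a} => {i | f p.1 i < g p.2 i}) := by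
      ext i
      simp only [Set.mem_setOf_eq, Set.sInter_range, Set.mem_iInter, Set.mem_setOf_eq]
      constructor
      · rintro h ⟨⟨x, hx⟩, ⟨y, hy⟩⟩; exact h x hx y hy
      · intro h x hx y hy; exact h ⟨⟨x, hx⟩, ⟨y, hy⟩⟩
    rw [this]
    have hseg : #{x : θ₁.ord.ToType // x ≤ a} < #ι := by
      rw [← heq₁]
      have h1 : #(Set.Iio a) < θ₁ := Cardinal.mk_Iio_ord_toType a
      have h2 : ({x : θ₁.ord.ToType | x ≤ a} : Set _) = insert a (Set.Iio a) := by
        ext x; simp [le_iff_lt_or_eq, or_comm]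
      calc #{x : θ₁.ord.ToType // x ≤ a} = #(insert a (Set.Iio a) : Set _) := by rw [← h2]; rfl
        _ ≤ #(Set.Iio a) + 1 := Cardinal.mk_insert_le
        _ < θ₁ := Cardinal.add_lt_of_lt hθ₁.aleph0_le h1
            (lt_of_lt_of_le Cardinal.one_lt_aleph0 hθ₁.aleph0_le)
    refine hcomp _ (lt_of_le_of_lt Cardinal.mk_range_le ?_) ?_
    · rw [Cardinal.mk_prod]; simp only [Cardinal.lift_id]
      exact Cardinal.mul_lt_of_lt hκ.le hseg hseg
    · rintro A ⟨p, rfl⟩; exact hfg p.1 p.2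
  }
end
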